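/- Let (x,f) be a feasible solution to LP-BB on a graph with m ≥ 2 edges. Then there exists a feasible solution (x',f') to LP-BB whose cost is at most (1 + 1/(m−1))^m times the cost of (x,f) such that (i) for every edge e, either x'_e = 0 or x'_e ≥ 1/m², (ii) f'_p = 0 for every path p that uses an edge e with x'_e = 0, and (iii) for every edge e with x'_e > 0 there exists an index i ∈ [r] with ∑_{p∈P_i: e∈p} f'_p = x'_e. -/

import Mathlib

set_option linter.unusedSectionVars false
open Finset

noncomputable def Fv {V : Type*} [Fintype V] [DecidableEq V] (G : SimpleGraph V)
    [DecidableRel G.Adj] {r : ℕ} (s t : Fin r → V)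
    (f : ∀ i : Fin r, G.Path (s i) (t i) → ℝ) (i : Fin r) (e : Sym2 V) : ℝ :=
  ∑ p : G.Path (s i) (t i), if e ∈ p.1.edges then f i p else 0

noncomputable def Xv {V : Type*} [Fintype V] [DecidableEq V] (G : SimpleGraph V)
    [DecidableRel G.Adj] {r : ℕ} [Nonempty (Fin r)] (s t : Fin r → V)
    (f : ∀ i : Fin r, G.Path (s i) (t i) → ℝ) (e : Sym2 V) : ℝ :=
  Finset.univ.sup' Finset.univ_nonempty fun i => Fv G s t f i e

noncomputable def costv {V : Type*} [Fintype V] [DecidableEq V] (G : SimpleGraph V)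
    [DecidableRel G.Adj] {r : ℕ} [Nonempty (Fin r)] (s t : Fin r → V)
    (c ℓ : Sym2 V → ℝ) (δ : Fin r → ℝ)
    (f : ∀ i : Fin r, G.Path (s i) (t i) → ℝ) : ℝ :=
  ∑ e ∈ G.edgeFinset, c e * Xv G s t f e +
    ∑ i, δ i * ∑ p : G.Path (s i) (t i), (p.1.edges.map ℓ).sum * f i p

section Key
variable {V : Type*} [Fintype V] [DecidableEq V] (G : SimpleGraph V)
    [DecidableRel G.Adj] {r : ℕ} [Nonempty (Fin r)] (s t : Fin r → V)

theorem Fv_nonneg (f : ∀ i : Fin r, G.Path (s i) (t i) → ℝ) (hf : ∀ i p, 0 ≤ f i p)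
    (i : Fin r) (e : Sym2 V) : 0 ≤ Fv G s t f i e :=
  Finset.sum_nonneg fun p _ => by by_cases h : e ∈ p.1.edges <;> simp [Fv, h, hf]

theorem Fv_le_Xv (f : ∀ i : Fin r, G.Path (s i) (t i) → ℝ) (i : Fin r) (e : Sym2 V) :
    Fv G s t f i e ≤ Xv G s t f e := by
  unfold Xv; exact Finset.le_sup' (fun j => Fv G s t f j e) (mem_univ i)

theorem Xv_nonneg (f : ∀ i : Fin r, G.Path (s i) (t i) → ℝ) (hf : ∀ i p, 0 ≤ f i p)
    (e : Sym2 V) : 0 ≤ Xv G s t f e :=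
  le_trans (Fv_nonneg G s t f hf (Classical.arbitrary _) e) (Fv_le_Xv G s t f _ e)

theorem f_le_Fv (f : ∀ i : Fin r, G.Path (s i) (t i) → ℝ) (hf : ∀ i p, 0 ≤ f i p)
    (i : Fin r) (p : G.Path (s i) (t i)) (e : Sym2 V) (he : e ∈ p.1.edges) :
    f i p ≤ Fv G s t f i e := by
  have := Finset.single_le_sum (f := fun q : G.Path (s i) (t i) =>
      if e ∈ q.1.edges then f i q else 0)
    (fun q _ => by by_cases h : e ∈ q.1.edges <;> simp [h, hf]) (mem_univ p)
  simpa [Fv, he] using this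

theorem ellp_nonneg (ℓ : Sym2 V → ℝ) (hℓ : ∀ e, 0 ≤ ℓ e) {u v : V} (p : G.Walk u v) :
    0 ≤ (p.edges.map ℓ).sum :=
  List.sum_nonneg (by intro a ha; rcases List.mem_map.1 ha with ⟨e, _, rfl⟩; exact hℓ e)

theorem costv_nonneg (c ℓ : Sym2 V → ℝ) (δ : Fin r → ℝ)
    (hc : ∀ e, 0 ≤ c e) (hℓ : ∀ e, 0 ≤ ℓ e) (hδ : ∀ i, 0 ≤ δ i)
    (f : ∀ i : Fin r, G.Path (s i) (t i) → ℝ) (hf : ∀ i p, 0 ≤ f i p) :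
    0 ≤ costv G s t c ℓ δ f := by
  refine add_nonneg (Finset.sum_nonneg fun e _ =>
    mul_nonneg (hc e) (Xv_nonneg G s t f hf e)) (Finset.sum_nonneg fun i _ =>
    mul_nonneg (hδ i) (Finset.sum_nonneg fun p _ =>
      mul_nonneg (ellp_nonneg G ℓ hℓ _) (hf i p)))

end Key
theorem lp_bb_key {V : Type*} [Fintype V] [DecidableEq V] (G : SimpleGraph V)
    [DecidableRel G.Adj] {r : ℕ} [Nonempty (Fin r)] (s t : Fin r → V)
    (c ℓ : Sym2 V → ℝ) (δ : Fin r → ℝ)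
    (hc : ∀ e, 0 ≤ c e) (hℓ : ∀ e, 0 ≤ ℓ e) (hδ : ∀ i, 0 ≤ δ i)
    (m : ℕ) (hm2 : 2 ≤ m) (hcard : G.edgeFinset.card ≤ m) :
    ∀ (k : ℕ) (f : ∀ i : Fin r, G.Path (s i) (t i) → ℝ),
      (∀ i p, 0 ≤ f i p) → (∀ i, ∑ p, f i p = 1) →
      (∃ A : Finset (Sym2 V), A.card ≤ k ∧
        ∀ e ∈ G.edgeFinset, 0 < Xv G s t f e → e ∈ A) →
      ∃ f' : ∀ i : Fin r, G.Path (s i) (t i) → ℝ,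
        (∀ i p, 0 ≤ f' i p) ∧ (∀ i, ∑ p, f' i p = 1) ∧
        (∀ e ∈ G.edgeFinset, Xv G s t f' e = 0 ∨ 1 / (m : ℝ) ^ 2 ≤ Xv G s t f' e) ∧
        costv G s t c ℓ δ f' ≤ (1 + 1 / ((m : ℝ) - 1)) ^ k * costv G s t c ℓ δ f := by
  classical
  have hM2 : (2 : ℝ) ≤ (m : ℝ) := by exact_mod_cast hm2
  have hM1 : (0 : ℝ) < (m : ℝ) - 1 := by linarith
  have hM0 : (0 : ℝ) < (m : ℝ) := by linarith
  set b : ℝ := 1 + 1 / ((m : ℝ) - 1) with hbdef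
  have hb1 : 1 ≤ b := by
    have : 0 < 1 / ((m : ℝ) - 1) := by positivity
    simp [hbdef]; linarith
  have hb0 : 0 < b := by linarith
  have hbM : b = (m : ℝ) / ((m : ℝ) - 1) := by
    rw [eq_div_iff hM1.ne', hbdef, add_mul, one_div, inv_mul_cancel₀ hM1.ne']; ring
  -- the "no small positive edge" case, for any k
  have hdone : ∀ (k : ℕ) (f : ∀ i : Fin r, G.Path (s i) (t i) → ℝ),
      (∀ i p, 0 ≤ f i p) → (∀ i, ∑ p, f i p = 1) →
      (∀ e ∈ G.edgeFinset, 0 < Xv G s t f e → 1 / (m : ℝ) ^ 2 ≤ Xv G s t f e) →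
      ∃ f' : ∀ i : Fin r, G.Path (s i) (t i) → ℝ,
        (∀ i p, 0 ≤ f' i p) ∧ (∀ i, ∑ p, f' i p = 1) ∧
        (∀ e ∈ G.edgeFinset, Xv G s t f' e = 0 ∨ 1 / (m : ℝ) ^ 2 ≤ Xv G s t f' e) ∧
        costv G s t c ℓ δ f' ≤ b ^ k * costv G s t c ℓ δ f := by
    intro k f hf hfl hbig
    refine ⟨f, hf, hfl, ?_, ?_⟩
    · intro e he
      rcases eq_or_lt_of_le (Xv_nonneg G s t f hf e) with h | h
      · exact Or.inl h.symm
      · exact Or.inr (hbig e he h)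
    · calc costv G s t c ℓ δ f = 1 * costv G s t c ℓ δ f := (one_mul _).symm
        _ ≤ b ^ k * costv G s t c ℓ δ f :=
          mul_le_mul_of_nonneg_right (one_le_pow₀ hb1)
            (costv_nonneg G s t c ℓ δ hc hℓ hδ f hf)
  intro k
  induction k with
  | zero =>
    intro f hf hfl ⟨A, hA, hAall⟩
    refine hdone 0 f hf hfl ?_
    intro e he hpos
    have := hAall e he hpos
    simp [Finset.card_eq_zero.mp (Nat.le_zero.mp hA)] at this
  | succ k ih =>
    intro f hf hfl ⟨A, hA, hAall⟩
    by_cases hex : ∃ e ∈ G.edgeFinset, 0 < Xv G s t f e ∧ Xv G s t f e < 1 / (m : ℝ) ^ 2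
    · obtain ⟨e0, he0, he0pos, he0small⟩ := hex
      set S : Finset (Sym2 V) :=
        G.edgeFinset.filter (fun e => Xv G s t f e < 1 / (m : ℝ) ^ 2) with hSdef
      set Good : ∀ i : Fin r, G.Path (s i) (t i) → Prop :=
        fun i p => ∀ e ∈ p.1.edges, 1 / (m : ℝ) ^ 2 ≤ Xv G s t f e with hGood
      set lam : Fin r → ℝ := fun i => ∑ p, if Good i p then f i p else 0 with hlam
      -- bound on the bad flow
      have hbad : ∀ i, (∑ p : G.Path (s i) (t i), if Good i p then (0:ℝ) else f i p)
          ≤ ∑ e ∈ S, Fv G s t f i e := by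
        intro i
        have h1 : ∀ p : G.Path (s i) (t i), (if Good i p then (0:ℝ) else f i p)
            ≤ ∑ e ∈ S, (if e ∈ p.1.edges then f i p else 0) := by
          intro p
          by_cases hg : Good i p
          · rw [if_pos hg]
            refine Finset.sum_nonneg fun e _ => ?_
            by_cases h : e ∈ p.1.edges
            · rw [if_pos h]; exact hf i p
            · rw [if_neg h]
          · rw [if_neg hg]
            have hg' : ∃ e ∈ p.1.edges, Xv G s t f e < 1 / (m : ℝ) ^ 2 := by
              by_contra hcon
              push_neg at hcon
              exact hg (by simp only [hGood]; exact hcon)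
            obtain ⟨e1, he1p, he1small⟩ := hg'
            have he1S : e1 ∈ S := by
              rw [hSdef]
              exact mem_filter.2 ⟨SimpleGraph.mem_edgeFinset.2
                (p.1.edges_subset_edgeSet he1p), he1small⟩
            have := Finset.single_le_sum
              (f := fun e => if e ∈ p.1.edges then f i p else 0)
              (fun e _ => by
                show (0:ℝ) ≤ if e ∈ p.1.edges then f i p else 0
                by_cases h : e ∈ p.1.edges
                · rw [if_pos h]; exact hf i p
                · rw [if_neg h]) he1S
            simpa [he1p] using this
        calc (∑ p : G.Path (s i) (t i), if Good i p then (0:ℝ) else f i p)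
            ≤ ∑ p : G.Path (s i) (t i), ∑ e ∈ S, (if e ∈ p.1.edges then f i p else 0) :=
              Finset.sum_le_sum fun p _ => h1 p
          _ = ∑ e ∈ S, Fv G s t f i e := by
              rw [Finset.sum_comm]
              simp only [Fv]
      have hSm : (S.card : ℝ) ≤ (m : ℝ) := by
        exact_mod_cast le_trans (Finset.card_le_card (by rw [hSdef]; exact filter_subset _ _)) hcard
      have hSsum : ∀ i, ∑ e ∈ S, Fv G s t f i e ≤ 1 / (m : ℝ) := by
        intro i
        calc ∑ e ∈ S, Fv G s t f i e ≤ S.card • (1 / (m : ℝ) ^ 2) := by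
              refine Finset.sum_le_card_nsmul _ _ _ (fun e heS => ?_)
              have heS' := heS; rw [hSdef] at heS'
              exact le_of_lt (lt_of_le_of_lt (Fv_le_Xv G s t f i e) (mem_filter.1 heS').2)
          _ = (S.card : ℝ) * (1 / (m : ℝ) ^ 2) := by rw [nsmul_eq_mul]
          _ ≤ (m : ℝ) * (1 / (m : ℝ) ^ 2) := by
              apply mul_le_mul_of_nonneg_right hSm; positivity
          _ = 1 / (m : ℝ) := by field_simp
      have hlam_ge : ∀ i, ((m : ℝ) - 1) / (m : ℝ) ≤ lam i := by
        intro i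
        have hsplit : (∑ p : G.Path (s i) (t i), if Good i p then f i p else 0)
            + (∑ p : G.Path (s i) (t i), if Good i p then (0:ℝ) else f i p) = 1 := by
          calc (∑ p : G.Path (s i) (t i), if Good i p then f i p else 0)
              + (∑ p : G.Path (s i) (t i), if Good i p then (0:ℝ) else f i p)
              = ∑ p : G.Path (s i) (t i),
                  ((if Good i p then f i p else 0) + (if Good i p then (0:ℝ) else f i p)) :=
                Finset.sum_add_distrib.symm
            _ = ∑ p : G.Path (s i) (t i), f i p := by
                refine Finset.sum_congr rfl fun p _ => ?_
                by_cases hg : Good i p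
                · rw [if_pos hg, if_pos hg, add_zero]
                · rw [if_neg hg, if_neg hg, zero_add]
            _ = 1 := hfl i
        have hlami : lam i = ∑ p : G.Path (s i) (t i), if Good i p then f i p else 0 := rfl
        have h2 := le_trans (hbad i) (hSsum i)
        have h3 : ((m : ℝ) - 1) / (m : ℝ) = 1 - 1 / (m : ℝ) := by field_simp
        linarith
      have hlam_pos : ∀ i, 0 < lam i := fun i =>
        lt_of_lt_of_le (by positivity) (hlam_ge i)
      have hinv : ∀ i, 1 / lam i ≤ b := by
        intro i
        rw [hbM, div_le_div_iff₀ (hlam_pos i) hM1]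
        have h4 := mul_le_mul_of_nonneg_left (hlam_ge i) (le_of_lt hM0)
        calc (1 : ℝ) * ((m : ℝ) - 1) = (m : ℝ) * (((m : ℝ) - 1) / (m : ℝ)) := by field_simp
          _ ≤ (m : ℝ) * lam i := h4
      -- the rerouted flow
      set f1 : ∀ i : Fin r, G.Path (s i) (t i) → ℝ :=
        fun i p => if Good i p then f i p / lam i else 0 with hf1
      have hf1nn : ∀ i p, 0 ≤ f1 i p := by
        intro i p
        show 0 ≤ if Good i p then f i p / lam i else 0
        by_cases hg : Good i p
        · rw [if_pos hg]; exact div_nonneg (hf i p) (hlam_pos i).le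
        · rw [if_neg hg]
      have hf1sum : ∀ i, ∑ p, f1 i p = 1 := by
        intro i
        have h5 : ∑ p, f1 i p = (∑ p : G.Path (s i) (t i),
            if Good i p then f i p else 0) / lam i := by
          rw [Finset.sum_div]
          refine Finset.sum_congr rfl fun p _ => ?_
          show (if Good i p then f i p / lam i else 0)
              = (if Good i p then f i p else 0) / lam i
          by_cases hg : Good i p
          · rw [if_pos hg, if_pos hg]
          · rw [if_neg hg, if_neg hg, zero_div]
        rw [h5]
        have h6 : (∑ p : G.Path (s i) (t i), if Good i p then f i p else 0) = lam i := rfl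
        rw [h6]
        exact div_self (hlam_pos i).ne'
      have hf1le : ∀ i p, f1 i p ≤ b * f i p := by
        intro i p
        show (if Good i p then f i p / lam i else 0) ≤ b * f i p
        by_cases hg : Good i p
        · rw [if_pos hg, div_eq_mul_one_div, mul_comm]
          exact mul_le_mul_of_nonneg_right (hinv i) (hf i p)
        · rw [if_neg hg]
          exact mul_nonneg hb0.le (hf i p)
      have hF1b : ∀ i e, Fv G s t f1 i e ≤ b * Fv G s t f i e := by
        intro i e
        simp only [Fv]
        rw [Finset.mul_sum]
        refine Finset.sum_le_sum fun p _ => ?_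
        by_cases hp : e ∈ p.1.edges
        · rw [if_pos hp, if_pos hp]; exact hf1le i p
        · rw [if_neg hp, if_neg hp, mul_zero]
      have hX1b : ∀ e, Xv G s t f1 e ≤ b * Xv G s t f e := by
        intro e
        refine Finset.sup'_le _ _ fun i _ => ?_
        exact le_trans (hF1b i e)
          (mul_le_mul_of_nonneg_left (Fv_le_Xv G s t f i e) hb0.le)
      have hX1S : ∀ e ∈ S, Xv G s t f1 e = 0 := by
        intro e heS
        have heS' := heS; rw [hSdef] at heS'
        have hFz : ∀ i, Fv G s t f1 i e = 0 := by
          intro i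
          simp only [Fv]
          refine Finset.sum_eq_zero fun p _ => ?_
          by_cases hp : e ∈ p.1.edges
          · rw [if_pos hp]
            show (if Good i p then f i p / lam i else 0) = 0
            by_cases hg : Good i p
            · exact absurd (mem_filter.1 heS').2 (not_lt.2 (hg e hp))
            · rw [if_neg hg]
          · rw [if_neg hp]
        refine le_antisymm (Finset.sup'_le _ _ fun i _ => le_of_eq (hFz i))
          (Xv_nonneg G s t f1 hf1nn e)
      have he0A : e0 ∈ A := hAall e0 he0 he0pos
      have hA' : (A.erase e0).card ≤ k := by
        rw [Finset.card_erase_of_mem he0A]; omega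
      have hAall' : ∀ e ∈ G.edgeFinset, 0 < Xv G s t f1 e → e ∈ A.erase e0 := by
        intro e he hp
        have hXfpos : 0 < Xv G s t f e := by
          by_contra h
          push_neg at h
          have hz : Xv G s t f e = 0 := le_antisymm h (Xv_nonneg G s t f hf e)
          have := hX1b e
          rw [hz, mul_zero] at this
          linarith
        have hne : e ≠ e0 := by
          intro h
          have hz : Xv G s t f1 e0 = 0 :=
            hX1S e0 (by rw [hSdef]; exact mem_filter.2 ⟨he0, he0small⟩)
          rw [h, hz] at hp
          exact lt_irrefl 0 hp
        exact Finset.mem_erase.2 ⟨hne, hAall e he hXfpos⟩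
      have hcost1 : costv G s t c ℓ δ f1 ≤ b * costv G s t c ℓ δ f := by
        simp only [costv]
        rw [mul_add, Finset.mul_sum, Finset.mul_sum]
        refine add_le_add (Finset.sum_le_sum fun e _ => ?_)
          (Finset.sum_le_sum fun i _ => ?_)
        · calc c e * Xv G s t f1 e ≤ c e * (b * Xv G s t f e) :=
              mul_le_mul_of_nonneg_left (hX1b e) (hc e)
            _ = b * (c e * Xv G s t f e) := by ring
        · have h7 : (∑ p : G.Path (s i) (t i), (p.1.edges.map ℓ).sum * f1 i p)
              ≤ b * ∑ p : G.Path (s i) (t i), (p.1.edges.map ℓ).sum * f i p := by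
            rw [Finset.mul_sum]
            refine Finset.sum_le_sum fun p _ => ?_
            calc (p.1.edges.map ℓ).sum * f1 i p
                ≤ (p.1.edges.map ℓ).sum * (b * f i p) :=
                  mul_le_mul_of_nonneg_left (hf1le i p) (ellp_nonneg G ℓ hℓ p.1)
              _ = b * ((p.1.edges.map ℓ).sum * f i p) := by ring
          calc δ i * ∑ p : G.Path (s i) (t i), (p.1.edges.map ℓ).sum * f1 i p
              ≤ δ i * (b * ∑ p : G.Path (s i) (t i), (p.1.edges.map ℓ).sum * f i p) :=
                mul_le_mul_of_nonneg_left h7 (hδ i)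
            _ = b * (δ i * ∑ p : G.Path (s i) (t i), (p.1.edges.map ℓ).sum * f i p) := by ring
      rcases ih f1 hf1nn hf1sum ⟨A.erase e0, hA', hAall'⟩ with ⟨f', h1, h2, h3, h4⟩
      refine ⟨f', h1, h2, h3, ?_⟩
      calc costv G s t c ℓ δ f' ≤ b ^ k * costv G s t c ℓ δ f1 := h4
        _ ≤ b ^ k * (b * costv G s t c ℓ δ f) :=
            mul_le_mul_of_nonneg_left hcost1 (pow_nonneg hb0.le k)
        _ = b ^ (k + 1) * costv G s t c ℓ δ f := by ring
    · push_neg at hex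
      rcases hdone (k + 1) f hf hfl (fun e he hpos => hex e he hpos) with ⟨f', h1, h2, h3, h4⟩
      exact ⟨f', h1, h2, h3, h4⟩


/-- Let `(x, f)` be a feasible solution to LP-BB on a graph with `m ≥ 2`
edges.  Then there exists a feasible solution `(x', f')` to LP-BB whose cost is at most
`(1 + 1/(m-1))^m` times the cost of `(x, f)` such that
(i) every edge `e` has `x' e = 0` or `x' e ≥ 1/m²`,
(ii) `f' p = 0` for every path `p` using an edge `e` with `x' e = 0`, and
(iii) every edge `e` with `x' e > 0` has some index `i` with `∑_{p ∋ e} f'_p = x' e`. -/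
theorem lp_bb_rounding_tight_edges
    {V : Type*} [Fintype V] [DecidableEq V] (G : SimpleGraph V) [DecidableRel G.Adj]
    (r : ℕ) (s t : Fin r → V)
    (c ℓ : Sym2 V → ℝ) (δ : Fin r → ℝ)
    (hc : ∀ e, 0 ≤ c e) (hℓ : ∀ e, 0 ≤ ℓ e) (hδ : ∀ i, 0 ≤ δ i)
    (m : ℕ) (hm : m = G.edgeFinset.card) (hm2 : 2 ≤ m)
    (x : Sym2 V → ℝ) (f : ∀ i : Fin r, G.Path (s i) (t i) → ℝ)
    (hx : ∀ e, 0 ≤ x e) (hf : ∀ i p, 0 ≤ f i p)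
    (hflow : ∀ i, ∑ p : G.Path (s i) (t i), f i p = 1)
    (hcap : ∀ i : Fin r, ∀ e ∈ G.edgeFinset,
      ∑ p : G.Path (s i) (t i), (if e ∈ p.1.edges then f i p else 0) ≤ x e) :
    ∃ (x' : Sym2 V → ℝ) (f' : ∀ i : Fin r, G.Path (s i) (t i) → ℝ),
      (∀ e, 0 ≤ x' e) ∧ (∀ i p, 0 ≤ f' i p) ∧
      (∀ i, ∑ p : G.Path (s i) (t i), f' i p = 1) ∧
      (∀ i : Fin r, ∀ e ∈ G.edgeFinset,
        ∑ p : G.Path (s i) (t i), (if e ∈ p.1.edges then f' i p else 0) ≤ x' e) ∧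
      -- (i): each edge value is 0 or at least 1/m²
      (∀ e ∈ G.edgeFinset, x' e = 0 ∨ 1 / (m : ℝ) ^ 2 ≤ x' e) ∧
      -- (ii): paths through zeroed-out edges carry no flow
      (∀ i : Fin r, ∀ p : G.Path (s i) (t i),
        (∃ e ∈ p.1.edges, x' e = 0) → f' i p = 0) ∧
      -- (iii): every positive edge value is tight for some commodity
      (∀ e ∈ G.edgeFinset, 0 < x' e →
        ∃ i : Fin r, ∑ p : G.Path (s i) (t i), (if e ∈ p.1.edges then f' i p else 0) = x' e) ∧
      -- cost increases by a factor of at most (1 + 1/(m-1))^m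
      (∑ e ∈ G.edgeFinset, c e * x' e +
          ∑ i, δ i * ∑ p : G.Path (s i) (t i), (p.1.edges.map ℓ).sum * f' i p
        ≤ (1 + 1 / ((m : ℝ) - 1)) ^ m *
          (∑ e ∈ G.edgeFinset, c e * x e +
            ∑ i, δ i * ∑ p : G.Path (s i) (t i), (p.1.edges.map ℓ).sum * f i p)) := by
  classical
  have hM2 : (2 : ℝ) ≤ (m : ℝ) := by exact_mod_cast hm2
  have hb0 : (0 : ℝ) ≤ 1 + 1 / ((m : ℝ) - 1) := by
    have : (0:ℝ) < (m : ℝ) - 1 := by linarith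
    positivity
  rcases Nat.eq_zero_or_pos r with hr0 | hr
  · subst hr0
    refine ⟨fun _ => 0, f, fun e => le_refl 0, hf, hflow,
      fun i => i.elim0, fun e _ => Or.inl rfl, fun i => i.elim0,
      fun e _ h => absurd h (lt_irrefl 0), ?_⟩
    simp only [Finset.univ_eq_empty, Finset.sum_empty, mul_zero,
      Finset.sum_const_zero, add_zero]
    exact mul_nonneg (pow_nonneg hb0 m)
      (Finset.sum_nonneg fun e _ => mul_nonneg (hc e) (hx e))
  · haveI : Nonempty (Fin r) := ⟨⟨0, hr⟩⟩
    obtain ⟨f', h1, h2, h3, h4⟩ := lp_bb_key G s t c ℓ δ hc hℓ hδ m hm2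
      (le_of_eq hm.symm) m f hf hflow ⟨G.edgeFinset, le_of_eq hm.symm, fun e he _ => he⟩
    refine ⟨Xv G s t f', f', Xv_nonneg G s t f' h1, h1, h2,
      fun i e he => Fv_le_Xv G s t f' i e, h3, ?_, ?_, ?_⟩
    · rintro i p ⟨e, hep, hXe⟩
      have ha := f_le_Fv G s t f' h1 i p e hep
      have hb := Fv_le_Xv G s t f' i e
      have hcc := h1 i p
      rw [hXe] at hb
      linarith
    · intro e he _
      obtain ⟨i, _, hi⟩ := Finset.exists_mem_eq_sup'
        (Finset.univ_nonempty (α := Fin r)) (fun i => Fv G s t f' i e)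
      exact ⟨i, hi.symm⟩
    · have hle : costv G s t c ℓ δ f ≤
          ∑ e ∈ G.edgeFinset, c e * x e +
            ∑ i, δ i * ∑ p : G.Path (s i) (t i), (p.1.edges.map ℓ).sum * f i p := by
        refine add_le_add (Finset.sum_le_sum fun e he => ?_) le_rfl
        refine mul_le_mul_of_nonneg_left ?_ (hc e)
        exact Finset.sup'_le _ _ fun i _ => hcap i e he
      calc ∑ e ∈ G.edgeFinset, c e * Xv G s t f' e +
            ∑ i, δ i * ∑ p : G.Path (s i) (t i), (p.1.edges.map ℓ).sum * f' i p
          = costv G s t c ℓ δ f' := rfl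
        _ ≤ (1 + 1 / ((m : ℝ) - 1)) ^ m * costv G s t c ℓ δ f := h4
        _ ≤ _ := mul_le_mul_of_nonneg_left hle (pow_nonneg hb0 m)
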